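/- arXiv:2109.03682 — 6 statements merged into one kernel-verified Lean document; each statement's English description precedes it below -/
import Mathlib

section
/- Fix θ, φ ∈ ℝ, λ ∈ [0,1], and c₁, c₂, c₃ ∈ [−1,1]. Let ρ = (1/4)(I₄ + c₁·σ₁⊗σ₁ + c₂·σ₂⊗σ₂ + c₃·σ₃⊗σ₃) be the Bell-diagonal 4×4 matrix, ψ = ψ(θ,φ), ψ⊥ = ψ⊥(θ,φ), Q₋ = √((1+λ)/2)·ψ⊥ψ⊥† + √((1−λ)/2)·ψψ† (square root of the effect E₋ = λψ⊥ψ⊥† + (1−λ)I₂/2), and n = (sinθ·cosφ, sinθ·sinφ, cosθ). Then Tr₂[(I₂⊗Q₋)·ρ·(I₂⊗Q₋)] = (1/4)(I₂ − λ·(c₁n₁σ₁ + c₂n₂σ₂ + c₃n₃σ₃)), whose trace is 1/2, and the fidelity of the normalized conditional state with ψ is ⟨ψ, 2·Tr₂[(I₂⊗Q₋)ρ(I₂⊗Q₋)]·ψ⟩ = 1/2 − (λ/2)(c₁n₁² + c₂n₂² + c₃n₃²). -/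
open Matrix
open Kronecker

noncomputable section

/-- The qubit state with polar angle `θ` and azimuthal angle `φ` on the Bloch sphere. -/
def psi (θ φ : ℝ) : Fin 2 → ℂ :=
  ![(Real.cos (θ/2) : ℂ), Complex.exp (φ * Complex.I) * (Real.sin (θ/2) : ℂ)]

/-- The qubit state orthogonal to `psi θ φ`. -/
def psiPerp (θ φ : ℝ) : Fin 2 → ℂ :=
  ![-(Real.sin (θ/2) : ℂ), Complex.exp (φ * Complex.I) * (Real.cos (θ/2) : ℂ)]

/-- The rank-one matrix u u†. -/
def dyad (u : Fin 2 → ℂ) : Matrix (Fin 2) (Fin 2) ℂ :=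
  Matrix.of fun i j => u i * (starRingEnd ℂ) (u j)

/-- The first Pauli matrix. -/
def sigma1 : Matrix (Fin 2) (Fin 2) ℂ := !![0, 1; 1, 0]

/-- The second Pauli matrix. -/
def sigma2 : Matrix (Fin 2) (Fin 2) ℂ := !![0, -Complex.I; Complex.I, 0]

/-- The third Pauli matrix. -/
def sigma3 : Matrix (Fin 2) (Fin 2) ℂ := !![1, 0; 0, -1]

/-- The Bell-diagonal state with correlation coefficients c₁, c₂, c₃. -/
def bellDiag (c₁ c₂ c₃ : ℝ) : Matrix (Fin 2 × Fin 2) (Fin 2 × Fin 2) ℂ :=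
  ((1/4 : ℝ) : ℂ) • ((1 : Matrix (Fin 2 × Fin 2) (Fin 2 × Fin 2) ℂ)
    + (c₁ : ℂ) • (sigma1 ⊗ₖ sigma1) + (c₂ : ℂ) • (sigma2 ⊗ₖ sigma2)
    + (c₃ : ℂ) • (sigma3 ⊗ₖ sigma3))

/-- Square root of the unsharp effect operator E₋ = λ ψ⊥ψ⊥† + (1−λ) I₂/2. -/
def sqrtEffectMinus (θ φ l : ℝ) : Matrix (Fin 2) (Fin 2) ℂ :=
  (Real.sqrt ((1+l)/2) : ℂ) • dyad (psiPerp θ φ)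
    + (Real.sqrt ((1-l)/2) : ℂ) • dyad (psi θ φ)

/-- Partial trace over the second qubit. -/
def ptrace₂ (M : Matrix (Fin 2 × Fin 2) (Fin 2 × Fin 2) ℂ) : Matrix (Fin 2) (Fin 2) ℂ :=
  Matrix.of fun i j => ∑ k : Fin 2, M (i, k) (j, k)


-- Auxiliary lemmas

lemma hee (φ : ℝ) : Complex.exp (φ * Complex.I) * (starRingEnd ℂ) (Complex.exp (φ * Complex.I)) = 1 := by
  rw [← Complex.exp_conj, ← Complex.exp_add]
  simp

lemma dyad_mul (u v : Fin 2 → ℂ) :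
    dyad u * dyad v = Matrix.of fun i j =>
      (star u ⬝ᵥ v) * (u i * (starRingEnd ℂ) (v j)) := by
  ext i j
  simp [dyad, Matrix.mul_apply, Fin.sum_univ_two, dotProduct]
  ring

lemma dyad_mul_self (u : Fin 2 → ℂ) (h : star u ⬝ᵥ u = 1) : dyad u * dyad u = dyad u := by
  rw [dyad_mul, h]
  ext i j
  simp [dyad]

lemma dyad_mul_orth (u v : Fin 2 → ℂ) (h : star u ⬝ᵥ v = 0) : dyad u * dyad v = 0 := by
  rw [dyad_mul, h]
  ext i j
  simp

lemma psi_norm (θ φ : ℝ) : star (psi θ φ) ⬝ᵥ psi θ φ = 1 := by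
  simp [psi, dotProduct, Fin.sum_univ_two, Complex.conj_ofReal, -Complex.ofReal_cos, -Complex.ofReal_sin]
  have h2 : ((Real.sin (θ/2) : ℂ))^2 + ((Real.cos (θ/2)) : ℂ)^2 = 1 := by
    norm_cast; exact Real.sin_sq_add_cos_sq _
  linear_combination ((Real.sin (θ/2) : ℂ))^2 * hee φ + h2

lemma psiPerp_norm (θ φ : ℝ) : star (psiPerp θ φ) ⬝ᵥ psiPerp θ φ = 1 := by
  simp [psiPerp, dotProduct, Fin.sum_univ_two, Complex.conj_ofReal, -Complex.ofReal_cos, -Complex.ofReal_sin]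
  have h2 : ((Real.sin (θ/2) : ℂ))^2 + ((Real.cos (θ/2)) : ℂ)^2 = 1 := by
    norm_cast; exact Real.sin_sq_add_cos_sq _
  linear_combination ((Real.cos (θ/2) : ℂ))^2 * hee φ + h2

lemma orth1 (θ φ : ℝ) : star (psiPerp θ φ) ⬝ᵥ psi θ φ = 0 := by
  simp [psi, psiPerp, dotProduct, Fin.sum_univ_two, Complex.conj_ofReal, -Complex.ofReal_cos, -Complex.ofReal_sin]
  linear_combination ((Real.sin (θ/2) : ℂ)) * ((Real.cos (θ/2)) : ℂ) * hee φ

lemma orth2 (θ φ : ℝ) : star (psi θ φ) ⬝ᵥ psiPerp θ φ = 0 := by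
  simp [psi, psiPerp, dotProduct, Fin.sum_univ_two, Complex.conj_ofReal, -Complex.ofReal_cos, -Complex.ofReal_sin]
  linear_combination ((Real.sin (θ/2) : ℂ)) * ((Real.cos (θ/2)) : ℂ) * hee φ

lemma ptrace₂_kron (A B : Matrix (Fin 2) (Fin 2) ℂ) :
    ptrace₂ (A ⊗ₖ B) = B.trace • A := by
  ext i j
  simp [ptrace₂, Matrix.trace, Matrix.diag, Finset.sum_mul, mul_comm, mul_add]

lemma ptrace₂_add (M N : Matrix (Fin 2 × Fin 2) (Fin 2 × Fin 2) ℂ) :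
    ptrace₂ (M + N) = ptrace₂ M + ptrace₂ N := by
  ext i j; simp [ptrace₂, Finset.sum_add_distrib]

lemma ptrace₂_smul (c : ℂ) (M : Matrix (Fin 2 × Fin 2) (Fin 2 × Fin 2) ℂ) :
    ptrace₂ (c • M) = c • ptrace₂ M := by
  ext i j; simp [ptrace₂, Finset.mul_sum, mul_add]

theorem conditional_state_bell_diagonal (θ φ l c₁ c₂ c₃ : ℝ)
    (hl : l ∈ Set.Icc (0:ℝ) 1) (hc₁ : c₁ ∈ Set.Icc (-1:ℝ) 1)
    (hc₂ : c₂ ∈ Set.Icc (-1:ℝ) 1) (hc₃ : c₃ ∈ Set.Icc (-1:ℝ) 1) :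
    ptrace₂ (((1 : Matrix (Fin 2) (Fin 2) ℂ) ⊗ₖ sqrtEffectMinus θ φ l) * bellDiag c₁ c₂ c₃
        * ((1 : Matrix (Fin 2) (Fin 2) ℂ) ⊗ₖ sqrtEffectMinus θ φ l))
      = ((1/4 : ℝ) : ℂ) • ((1 : Matrix (Fin 2) (Fin 2) ℂ)
          - (l : ℂ) • (((c₁ * (Real.sin θ * Real.cos φ) : ℝ) : ℂ) • sigma1
              + ((c₂ * (Real.sin θ * Real.sin φ) : ℝ) : ℂ) • sigma2
              + ((c₃ * Real.cos θ : ℝ) : ℂ) • sigma3)) ∧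
    (ptrace₂ (((1 : Matrix (Fin 2) (Fin 2) ℂ) ⊗ₖ sqrtEffectMinus θ φ l) * bellDiag c₁ c₂ c₃
        * ((1 : Matrix (Fin 2) (Fin 2) ℂ) ⊗ₖ sqrtEffectMinus θ φ l))).trace = 1/2 ∧
    star (psi θ φ) ⬝ᵥ
        (((2 : ℂ) • ptrace₂ (((1 : Matrix (Fin 2) (Fin 2) ℂ) ⊗ₖ sqrtEffectMinus θ φ l)
            * bellDiag c₁ c₂ c₃
            * ((1 : Matrix (Fin 2) (Fin 2) ℂ) ⊗ₖ sqrtEffectMinus θ φ l))).mulVec (psi θ φ))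
      = ((1/2 - (l/2) * (c₁ * (Real.sin θ * Real.cos φ)^2 + c₂ * (Real.sin θ * Real.sin φ)^2
          + c₃ * (Real.cos θ)^2) : ℝ) : ℂ) := by
  obtain ⟨hl0, hl1⟩ := hl
  set Q := sqrtEffectMinus θ φ l with hQdef
  have ha : ((Real.sqrt ((1+l)/2) : ℂ)) * (Real.sqrt ((1+l)/2) : ℂ) = (((1+l)/2 : ℝ) : ℂ) := by
    norm_cast; exact Real.mul_self_sqrt (by linarith)
  have hb : ((Real.sqrt ((1-l)/2) : ℂ)) * (Real.sqrt ((1-l)/2) : ℂ) = (((1-l)/2 : ℝ) : ℂ) := by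
    norm_cast; exact Real.mul_self_sqrt (by linarith)
  have hQ2 : Q * Q = (((1+l)/2 : ℝ) : ℂ) • dyad (psiPerp θ φ)
      + (((1-l)/2 : ℝ) : ℂ) • dyad (psi θ φ) := by
    rw [hQdef]
    simp only [sqrtEffectMinus, add_mul, mul_add, smul_mul_assoc, mul_smul_comm,
      dyad_mul_self _ (psiPerp_norm θ φ), dyad_mul_self _ (psi_norm θ φ),
      dyad_mul_orth _ _ (orth1 θ φ), dyad_mul_orth _ _ (orth2 θ φ),
      smul_zero, add_zero, zero_add, smul_smul, ha, hb]
  have hp : ((Real.sin (θ/2) : ℂ))^2 + ((Real.cos (θ/2)) : ℂ)^2 = 1 := by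
    norm_cast; exact Real.sin_sq_add_cos_sq _
  have hq : ((Real.cos φ : ℂ))^2 + ((Real.sin φ : ℂ))^2 = 1 := by
    norm_cast; exact Real.cos_sq_add_sin_sq _
  have hs : ((Real.sin θ : ℝ) : ℂ) = 2 * (Real.sin (θ/2) : ℂ) * (Real.cos (θ/2) : ℂ) := by
    have h2 := Real.sin_two_mul (θ/2)
    rw [show 2*(θ/2) = θ by ring] at h2
    norm_cast
  have hcth : ((Real.cos θ : ℝ) : ℂ) = (Real.cos (θ/2) : ℂ)^2 - (Real.sin (θ/2) : ℂ)^2 := by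
    have h3 : Real.cos θ = Real.cos (θ/2)^2 - Real.sin (θ/2)^2 := by
      have h2 := Real.cos_two_mul (θ/2)
      rw [show 2*(θ/2) = θ by ring] at h2
      nlinarith [Real.sin_sq_add_cos_sq (θ/2)]
    norm_cast
  have he : Complex.exp (↑φ * Complex.I) = (Real.cos φ : ℂ) + (Real.sin φ : ℂ) * Complex.I := by
    rw [Complex.exp_mul_I]; norm_cast
  have hI : Complex.I^2 = -1 := Complex.I_sq
  have hQ2' : Q * Q = ((1/2 : ℝ) : ℂ) • 1 - ((l/2 : ℝ) : ℂ) •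
      (((Real.sin θ * Real.cos φ : ℝ) : ℂ) • sigma1
        + ((Real.sin θ * Real.sin φ : ℝ) : ℂ) • sigma2
        + ((Real.cos θ : ℝ) : ℂ) • sigma3) := by
    rw [hQ2]
    ext i j
    fin_cases i <;> fin_cases j
    · simp [dyad, psi, psiPerp, sigma1, sigma2, sigma3, he, Matrix.one_apply,
        Complex.conj_ofReal, Complex.I_sq, -Complex.ofReal_cos, -Complex.ofReal_sin]
      linear_combination (1/2:ℂ) * hp + ((l:ℂ)/2) * hcth
    · simp [dyad, psi, psiPerp, sigma1, sigma2, sigma3, he, Matrix.one_apply,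
        Complex.conj_ofReal, Complex.I_sq, -Complex.ofReal_cos, -Complex.ofReal_sin]
      linear_combination ((l:ℂ) * (Real.cos φ:ℂ)/2 - (l:ℂ) * (Real.sin φ:ℂ) * Complex.I/2) * hs
    · simp [dyad, psi, psiPerp, sigma1, sigma2, sigma3, he, Matrix.one_apply,
        Complex.conj_ofReal, Complex.I_sq, -Complex.ofReal_cos, -Complex.ofReal_sin]
      linear_combination ((l:ℂ) * (Real.cos φ:ℂ)/2 + (l:ℂ) * (Real.sin φ:ℂ) * Complex.I/2) * hs
    · simp [dyad, psi, psiPerp, sigma1, sigma2, sigma3, he, Matrix.one_apply,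
        Complex.conj_ofReal, Complex.I_sq, -Complex.ofReal_cos, -Complex.ofReal_sin]
      linear_combination ((-(l:ℂ)*(Real.sin φ:ℂ)^2*(Real.cos (θ/2):ℂ)^2/2
          + (l:ℂ)*(Real.sin φ:ℂ)^2*(Real.sin (θ/2):ℂ)^2/2
          - (Real.sin φ:ℂ)^2*((Real.sin (θ/2):ℂ)^2+(Real.cos (θ/2):ℂ)^2)/2)) * hI
        + (((l:ℂ)/2) * ((Real.cos (θ/2):ℂ)^2-(Real.sin (θ/2):ℂ)^2)
          + (1/2)*((Real.sin (θ/2):ℂ)^2+(Real.cos (θ/2):ℂ)^2)) * hq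
        - ((l:ℂ)/2) * hcth + (1/2:ℂ) * hp
  -- expansion of the sandwiched state
  have hexp : ((1 : Matrix (Fin 2) (Fin 2) ℂ) ⊗ₖ Q) * bellDiag c₁ c₂ c₃
      * ((1 : Matrix (Fin 2) (Fin 2) ℂ) ⊗ₖ Q)
      = ((1/4 : ℝ) : ℂ) • ((1 : Matrix (Fin 2) (Fin 2) ℂ) ⊗ₖ (Q * Q)
        + (c₁ : ℂ) • (sigma1 ⊗ₖ (Q * sigma1 * Q))
        + (c₂ : ℂ) • (sigma2 ⊗ₖ (Q * sigma2 * Q))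
        + (c₃ : ℂ) • (sigma3 ⊗ₖ (Q * sigma3 * Q))) := by
    rw [bellDiag, show (1 : Matrix (Fin 2 × Fin 2) (Fin 2 × Fin 2) ℂ)
      = (1 : Matrix (Fin 2) (Fin 2) ℂ) ⊗ₖ (1 : Matrix (Fin 2) (Fin 2) ℂ) from
      (Matrix.one_kronecker_one).symm]
    simp only [Matrix.mul_smul, Matrix.smul_mul, Matrix.mul_add, Matrix.add_mul,
      ← Matrix.mul_kronecker_mul, Matrix.one_mul, Matrix.mul_one]
  have hpt : ptrace₂ (((1 : Matrix (Fin 2) (Fin 2) ℂ) ⊗ₖ Q) * bellDiag c₁ c₂ c₃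
      * ((1 : Matrix (Fin 2) (Fin 2) ℂ) ⊗ₖ Q))
      = ((1/4 : ℝ) : ℂ) • ((Q * Q).trace • (1 : Matrix (Fin 2) (Fin 2) ℂ)
        + (c₁ : ℂ) • ((Q * sigma1 * Q).trace • sigma1)
        + (c₂ : ℂ) • ((Q * sigma2 * Q).trace • sigma2)
        + (c₃ : ℂ) • ((Q * sigma3 * Q).trace • sigma3)) := by
    rw [hexp]
    simp only [ptrace₂_smul, ptrace₂_add, ptrace₂_kron]
  -- trace computations
  have trQQ : (Q * Q).trace = 1 := by
    rw [hQ2']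
    simp [sigma1, sigma2, sigma3, Matrix.trace_fin_two, Matrix.sub_apply,
      Matrix.smul_apply, Matrix.add_apply, Matrix.one_apply]
  have tr1 : (Q * sigma1 * Q).trace = -((l : ℂ) * ((Real.sin θ * Real.cos φ : ℝ) : ℂ)) := by
    rw [Matrix.trace_mul_cycle, hQ2']
    simp [sigma1, sigma2, sigma3, Matrix.trace_fin_two, Matrix.mul_apply, Fin.sum_univ_two,
      Matrix.sub_apply, Matrix.smul_apply, Matrix.add_apply, Matrix.one_apply,
      -Complex.ofReal_cos, -Complex.ofReal_sin]
    push_cast [-Complex.ofReal_cos, -Complex.ofReal_sin]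
    ring
  have tr2 : (Q * sigma2 * Q).trace = -((l : ℂ) * ((Real.sin θ * Real.sin φ : ℝ) : ℂ)) := by
    rw [Matrix.trace_mul_cycle, hQ2']
    simp [sigma1, sigma2, sigma3, Matrix.trace_fin_two, Matrix.mul_apply, Fin.sum_univ_two,
      Matrix.sub_apply, Matrix.smul_apply, Matrix.add_apply, Matrix.one_apply,
      -Complex.ofReal_cos, -Complex.ofReal_sin]
    push_cast [-Complex.ofReal_cos, -Complex.ofReal_sin]
    linear_combination ((l:ℂ) * (Real.sin θ:ℂ) * (Real.sin φ:ℂ)) * hI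
  have tr3 : (Q * sigma3 * Q).trace = -((l : ℂ) * ((Real.cos θ : ℝ) : ℂ)) := by
    rw [Matrix.trace_mul_cycle, hQ2']
    simp [sigma1, sigma2, sigma3, Matrix.trace_fin_two, Matrix.mul_apply, Fin.sum_univ_two,
      Matrix.sub_apply, Matrix.smul_apply, Matrix.add_apply, Matrix.one_apply,
      -Complex.ofReal_cos, -Complex.ofReal_sin]
    push_cast [-Complex.ofReal_cos, -Complex.ofReal_sin]
    ring
  have key : ptrace₂ (((1 : Matrix (Fin 2) (Fin 2) ℂ) ⊗ₖ Q) * bellDiag c₁ c₂ c₃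
      * ((1 : Matrix (Fin 2) (Fin 2) ℂ) ⊗ₖ Q))
      = ((1/4 : ℝ) : ℂ) • ((1 : Matrix (Fin 2) (Fin 2) ℂ)
          - (l : ℂ) • (((c₁ * (Real.sin θ * Real.cos φ) : ℝ) : ℂ) • sigma1
              + ((c₂ * (Real.sin θ * Real.sin φ) : ℝ) : ℂ) • sigma2
              + ((c₃ * Real.cos θ : ℝ) : ℂ) • sigma3)) := by
    rw [hpt, trQQ, tr1, tr2, tr3]
    ext i j
    push_cast [-Complex.ofReal_cos, -Complex.ofReal_sin]
    simp [Matrix.smul_apply, Matrix.add_apply, Matrix.sub_apply, Matrix.one_apply,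
      -Complex.ofReal_cos, -Complex.ofReal_sin]
    ring
  refine ⟨key, ?_, ?_⟩
  · rw [key]
    simp [sigma1, sigma2, sigma3, Matrix.trace_fin_two, Matrix.smul_apply, Matrix.sub_apply,
      Matrix.add_apply, Matrix.one_apply]
    ring
  · rw [key]
    simp [Matrix.mulVec, dotProduct, dotProduct, Fin.sum_univ_two, psi,
      sigma1, sigma2, sigma3, he, Matrix.smul_apply, Matrix.sub_apply, Matrix.add_apply,
      Matrix.one_apply, Complex.conj_ofReal, -Complex.ofReal_cos, -Complex.ofReal_sin]
    push_cast [-Complex.ofReal_cos, -Complex.ofReal_sin]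
    linear_combination
      ((Real.cos (θ/2):ℂ) * (l:ℂ) * (Real.sin θ:ℂ) * (c₂:ℂ) * (Real.sin φ:ℂ)^2 * (Real.sin (θ/2):ℂ)
        - (l:ℂ) * (c₃:ℂ) * (Real.cos θ:ℂ) * (Real.sin φ:ℂ)^2 * (Real.sin (θ/2):ℂ)^2 / 2
        - (Real.sin φ:ℂ)^2 * (Real.sin (θ/2):ℂ)^2 / 2) * hI
      + ((l:ℂ) * (c₁:ℂ) * (Real.cos φ:ℂ)^2 * (Real.sin θ:ℂ) / 2
        + (l:ℂ) * (c₂:ℂ) * (Real.sin φ:ℂ)^2 * (Real.sin θ:ℂ) / 2) * hs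
      + ((l:ℂ) * (c₃:ℂ) * (Real.cos θ:ℂ) * (Real.sin (θ/2):ℂ)^2 / 2
        + (Real.sin (θ/2):ℂ)^2 / 2) * hq
      + ((l:ℂ) * (c₃:ℂ) * (Real.cos θ:ℂ) / 2) * hcth
      + (1/2:ℂ) * hp

end
end

section
/- (Lemma 2) Let n ∈ ℕ and λ₁, …, λₙ ∈ [0,1]. Set a = 2^{−n}·∏_{k=1}^{n}(1 + √(1 − λ_k²)) and b = ∏_{k=1}^{n} √(1 − λ_k²). Then 0 < a ≤ 1 and b ≤ a; consequently, the geometric quantum discord of the Bell-diagonal state with correlation coefficients c₁ = c₂ = −a, c₃ = −b, namely D = (1/2)(c₁² + c₂² + c₃² − max{c₁², c₂², c₃²}) = (1/2)(a² + b²), is strictly positive for every choice of the sharpness parameters λ₁, …, λₙ ∈ [0,1]. -/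
/-- Lemma 2: after `n` sequential unsharp measurements with sharpness parameters
`λ₁,…,λₙ ∈ [0,1]`, the Bell-diagonal average state with correlation coefficients
`c₁ = c₂ = −a`, `c₃ = −b` has strictly positive geometric discord. -/
theorem geometric_discord_positive (n : ℕ) (lam : Fin n → ℝ)
    (hlam : ∀ k, lam k ∈ Set.Icc (0:ℝ) 1) :
    0 < (∏ k, (1 + Real.sqrt (1 - lam k ^ 2))) / 2 ^ n ∧
    (∏ k, (1 + Real.sqrt (1 - lam k ^ 2))) / 2 ^ n ≤ 1 ∧
    (∏ k, Real.sqrt (1 - lam k ^ 2)) ≤ (∏ k, (1 + Real.sqrt (1 - lam k ^ 2))) / 2 ^ n ∧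
    (1/2) * ((-((∏ k, (1 + Real.sqrt (1 - lam k ^ 2))) / 2 ^ n))^2
        + (-((∏ k, (1 + Real.sqrt (1 - lam k ^ 2))) / 2 ^ n))^2
        + (-(∏ k, Real.sqrt (1 - lam k ^ 2)))^2
        - max (max ((-((∏ k, (1 + Real.sqrt (1 - lam k ^ 2))) / 2 ^ n))^2)
                   ((-((∏ k, (1 + Real.sqrt (1 - lam k ^ 2))) / 2 ^ n))^2))
              ((-(∏ k, Real.sqrt (1 - lam k ^ 2)))^2))
      = (1/2) * (((∏ k, (1 + Real.sqrt (1 - lam k ^ 2))) / 2 ^ n)^2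
          + (∏ k, Real.sqrt (1 - lam k ^ 2))^2) ∧
    0 < (1/2) * (((∏ k, (1 + Real.sqrt (1 - lam k ^ 2))) / 2 ^ n)^2
          + (∏ k, Real.sqrt (1 - lam k ^ 2))^2) := by
  set A := (∏ k, (1 + Real.sqrt (1 - lam k ^ 2))) with hA
  set B := (∏ k, Real.sqrt (1 - lam k ^ 2)) with hB
  have hs : ∀ k, 0 ≤ Real.sqrt (1 - lam k ^ 2) ∧ Real.sqrt (1 - lam k ^ 2) ≤ 1 := by
    intro k
    refine ⟨Real.sqrt_nonneg _, ?_⟩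
    have h := hlam k
    have h1 : (1 : ℝ) - lam k ^ 2 ≤ 1 := by nlinarith [h.1, h.2]
    calc Real.sqrt (1 - lam k ^ 2) ≤ Real.sqrt 1 := Real.sqrt_le_sqrt h1
      _ = 1 := Real.sqrt_one
  have hApos : 0 < A := by
    apply Finset.prod_pos
    intro k _
    have := (hs k).1
    linarith
  have hAle : A ≤ 2 ^ n := by
    calc A ≤ ∏ k : Fin n, (2:ℝ) := by
            apply Finset.prod_le_prod
            · intro k _; have := (hs k).1; linarith
            · intro k _; have := (hs k).2; linarith
      _ = 2 ^ n := by simp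
  have h2n : (0:ℝ) < 2 ^ n := by positivity
  have ha1 : 0 < A / 2 ^ n := by positivity
  have ha2 : A / 2 ^ n ≤ 1 := by
    rw [div_le_one h2n]; exact hAle
  have hBnn : 0 ≤ B := Finset.prod_nonneg fun k _ => (hs k).1
  have hBA : B ≤ A / 2 ^ n := by
    rw [le_div_iff₀ h2n]
    have : B * 2 ^ n = ∏ k : Fin n, (Real.sqrt (1 - lam k ^ 2) * 2) := by
      rw [Finset.prod_mul_distrib]; simp [hB]
    rw [this]
    apply Finset.prod_le_prod
    · intro k _; have := (hs k).1; linarith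
    · intro k _; have := (hs k).2; linarith
  have hmax : max (max ((-(A / 2 ^ n))^2) ((-(A / 2 ^ n))^2)) ((-B)^2) = (A / 2 ^ n)^2 := by
    have h1 : (-B)^2 ≤ (-(A / 2 ^ n))^2 := by nlinarith
    rw [max_self, max_eq_left h1, neg_pow]; ring_nf
  refine ⟨ha1, ha2, hBA, ?_, by positivity⟩
  rw [hmax]; ring
end

section
/- (Theorem 1, optimality) There do NOT exist real numbers λ₁, …, λ₇ ∈ [0,1] such that for every i ∈ {1, …, 7}: 1/2 + (λ_i/2^i)·∏_{k=1}^{i−1}(1 + √(1 − λ_k²)) > 3/4. Equivalently, if λ₁, …, λ₆ ∈ [0,1] satisfy 1/2 + (λ_i/2^i)·∏_{k=1}^{i−1}(1+√(1−λ_k²)) > 3/4 for all i ≤ 6, then ∏_{k=1}^{6}(1+√(1−λ_k²)) < 32, so even a sharp measurement (λ₇ = 1) by a seventh observer cannot exceed the classical bound. Hence at most 6 observers can share the task of remote state preparation from the equatorial circle with a single initially shared singlet state. -/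
set_option maxHeartbeats 2000000

private lemma sqrt_lt_of (l r : ℝ) (hr : 0 < r) (h : 1 - l^2 < r^2) :
    Real.sqrt (1 - l^2) < r := by
  rw [show r^2 = r*r by ring] at h
  exact (Real.sqrt_lt' hr).mpr (by nlinarith)

private lemma core (l0 l1 l2 l3 l4 l5 : ℝ)
    (h10 : 0 ≤ l1) (h20 : 0 ≤ l2) (h30 : 0 ≤ l3) (h40 : 0 ≤ l4) (h50 : 0 ≤ l5)
    (c0 : l0 > 1/2)
    (c1 : l1 * (1 + Real.sqrt (1 - l0^2)) > 1)
    (c2 : l2 * ((1 + Real.sqrt (1 - l0^2)) * (1 + Real.sqrt (1 - l1^2))) > 2)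
    (c3 : l3 * ((1 + Real.sqrt (1 - l0^2)) * (1 + Real.sqrt (1 - l1^2)) * (1 + Real.sqrt (1 - l2^2))) > 4)
    (c4 : l4 * ((1 + Real.sqrt (1 - l0^2)) * (1 + Real.sqrt (1 - l1^2)) * (1 + Real.sqrt (1 - l2^2)) * (1 + Real.sqrt (1 - l3^2))) > 8)
    (c5 : l5 * ((1 + Real.sqrt (1 - l0^2)) * (1 + Real.sqrt (1 - l1^2)) * (1 + Real.sqrt (1 - l2^2)) * (1 + Real.sqrt (1 - l3^2)) * (1 + Real.sqrt (1 - l4^2))) > 16) :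
    (1 + Real.sqrt (1 - l0^2)) * (1 + Real.sqrt (1 - l1^2)) * (1 + Real.sqrt (1 - l2^2))
      * (1 + Real.sqrt (1 - l3^2)) * (1 + Real.sqrt (1 - l4^2)) * (1 + Real.sqrt (1 - l5^2)) < 32 := by
  set s0 := Real.sqrt (1 - l0^2) with hs0d
  set s1 := Real.sqrt (1 - l1^2) with hs1d
  set s2 := Real.sqrt (1 - l2^2) with hs2d
  set s3 := Real.sqrt (1 - l3^2) with hs3d
  set s4 := Real.sqrt (1 - l4^2) with hs4d
  set s5 := Real.sqrt (1 - l5^2) with hs5d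
  have n0 : 0 ≤ s0 := Real.sqrt_nonneg _
  have n1 : 0 ≤ s1 := Real.sqrt_nonneg _
  have n2 : 0 ≤ s2 := Real.sqrt_nonneg _
  have n3 : 0 ≤ s3 := Real.sqrt_nonneg _
  have n4 : 0 ≤ s4 := Real.sqrt_nonneg _
  have n5 : 0 ≤ s5 := Real.sqrt_nonneg _
  -- step 0
  have hs0 : s0 < 0.8661 := sqrt_lt_of _ _ (by norm_num)
    (by linarith [sq_nonneg (l0 - 1/2)])
  have hp1 : (1 + s0) < 1.8661 := by linarith
  -- step 1
  have hl1 : 1.8661 * l1 > 1 := by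
    have h := mul_le_mul_of_nonneg_left hp1.le h10
    linarith
  have hs1 : s1 < 0.8444 := sqrt_lt_of _ _ (by norm_num)
    (by linarith [sq_nonneg (1.8661*l1 - 1)])
  have hp2 : (1 + s0) * (1 + s1) < 3.44187 := by
    have := mul_lt_mul'' hp1 (show 1+s1 < 1.8444 by linarith)
      (by linarith) (by linarith)
    linarith
  -- step 2
  have hl2 : 3.44187 * l2 > 2 := by
    have h := mul_le_mul_of_nonneg_left hp2.le h20
    linarith
  have hs2 : s2 < 0.8139 := sqrt_lt_of _ _ (by norm_num)
    (by linarith [sq_nonneg (3.44187*l2 - 2)])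
  have hp3 : (1 + s0) * (1 + s1) * (1 + s2) < 6.24321 := by
    have := mul_lt_mul'' hp2 (show 1+s2 < 1.8139 by linarith)
      (by positivity) (by linarith)
    linarith
  -- step 3
  have hl3 : 6.24321 * l3 > 4 := by
    have h := mul_le_mul_of_nonneg_left hp3.le h30
    linarith
  have hs3 : s3 < 0.7679 := sqrt_lt_of _ _ (by norm_num)
    (by linarith [sq_nonneg (6.24321*l3 - 4)])
  have hp4 : (1 + s0) * (1 + s1) * (1 + s2) * (1 + s3) < 11.03738 := by
    have := mul_lt_mul'' hp3 (show 1+s3 < 1.7679 by linarith)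
      (by positivity) (by linarith)
    linarith
  -- step 4
  have hl4 : 11.03738 * l4 > 8 := by
    have h := mul_le_mul_of_nonneg_left hp4.le h40
    linarith
  have hs4 : s4 < 0.689 := sqrt_lt_of _ _ (by norm_num)
    (by linarith [sq_nonneg (11.03738*l4 - 8)])
  have hp5 : (1 + s0) * (1 + s1) * (1 + s2) * (1 + s3) * (1 + s4) < 18.64214 := by
    have := mul_lt_mul'' hp4 (show 1+s4 < 1.689 by linarith)
      (by positivity) (by linarith)
    linarith
  -- step 5
  have hl5 : 18.64214 * l5 > 16 := by
    have h := mul_le_mul_of_nonneg_left hp5.le h50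
    linarith
  have hs5 : s5 < 0.5133 := sqrt_lt_of _ _ (by norm_num)
    (by linarith [sq_nonneg (18.64214*l5 - 16)])
  have := mul_lt_mul'' hp5 (show 1+s5 < 1.5133 by linarith)
    (by positivity) (by linarith)
  linarith

/-- Theorem 1 (optimality): no 7 sequential observers can all achieve average RSP
fidelity exceeding the classical bound 3/4 for the equatorial circle; equivalently,
if 6 observers succeed then the residual product is below 32, so a seventh sharp
measurement cannot beat the classical bound. -/
theorem at_most_six_bobs :
    (¬ ∃ lam : Fin 7 → ℝ, (∀ i, lam i ∈ Set.Icc (0:ℝ) 1) ∧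
      ∀ i : Fin 7,
        1/2 + lam i / 2 ^ ((i : ℕ) + 1)
            * ∏ k ∈ Finset.Iio i, (1 + Real.sqrt (1 - lam k ^ 2)) > 3/4) ∧
    (∀ lam : Fin 6 → ℝ, (∀ i, lam i ∈ Set.Icc (0:ℝ) 1) →
      (∀ i : Fin 6,
        1/2 + lam i / 2 ^ ((i : ℕ) + 1)
            * ∏ k ∈ Finset.Iio i, (1 + Real.sqrt (1 - lam k ^ 2)) > 3/4) →
      (∏ k : Fin 6, (1 + Real.sqrt (1 - lam k ^ 2))) < 32) := by
  constructor
  · rintro ⟨lam, hIcc, hcond⟩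
    have c0 : lam 0 > 1/2 := by
      have e := hcond 0
      rw [show Finset.Iio (0:Fin 7) = ∅ from by decide] at e
      rw [show (((0:Fin 7):ℕ) + 1) = 1 from rfl] at e
      norm_num at e
      linarith
    have c1 : lam 1 * ((1 + Real.sqrt (1 - lam 0 ^ 2))) > 1 := by
      have e := hcond 1
      rw [show Finset.Iio ((1:Fin 7)) = {0} from by decide] at e
      rw [show (((1:Fin 7):ℕ) + 1) = 2 from rfl] at e
      have p : ∏ k ∈ ({0} : Finset (Fin 7)), (1 + Real.sqrt (1 - lam k ^ 2)) = (1 + Real.sqrt (1 - lam 0 ^ 2)) := by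
        simp [Finset.prod_insert]; try ring
      rw [p] at e
      norm_num at e
      linarith
    have c2 : lam 2 * ((1 + Real.sqrt (1 - lam 0 ^ 2)) * (1 + Real.sqrt (1 - lam 1 ^ 2))) > 2 := by
      have e := hcond 2
      rw [show Finset.Iio ((2:Fin 7)) = {0,1} from by decide] at e
      rw [show (((2:Fin 7):ℕ) + 1) = 3 from rfl] at e
      have p : ∏ k ∈ ({0,1} : Finset (Fin 7)), (1 + Real.sqrt (1 - lam k ^ 2)) = (1 + Real.sqrt (1 - lam 0 ^ 2)) * (1 + Real.sqrt (1 - lam 1 ^ 2)) := by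
        simp [Finset.prod_insert]; try ring
      rw [p] at e
      norm_num at e
      linarith
    have c3 : lam 3 * ((1 + Real.sqrt (1 - lam 0 ^ 2)) * (1 + Real.sqrt (1 - lam 1 ^ 2)) * (1 + Real.sqrt (1 - lam 2 ^ 2))) > 4 := by
      have e := hcond 3
      rw [show Finset.Iio ((3:Fin 7)) = {0,1,2} from by decide] at e
      rw [show (((3:Fin 7):ℕ) + 1) = 4 from rfl] at e
      have p : ∏ k ∈ ({0,1,2} : Finset (Fin 7)), (1 + Real.sqrt (1 - lam k ^ 2)) = (1 + Real.sqrt (1 - lam 0 ^ 2)) * (1 + Real.sqrt (1 - lam 1 ^ 2)) * (1 + Real.sqrt (1 - lam 2 ^ 2)) := by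
        simp [Finset.prod_insert]; try ring
      rw [p] at e
      norm_num at e
      linarith
    have c4 : lam 4 * ((1 + Real.sqrt (1 - lam 0 ^ 2)) * (1 + Real.sqrt (1 - lam 1 ^ 2)) * (1 + Real.sqrt (1 - lam 2 ^ 2)) * (1 + Real.sqrt (1 - lam 3 ^ 2))) > 8 := by
      have e := hcond 4
      rw [show Finset.Iio ((4:Fin 7)) = {0,1,2,3} from by decide] at e
      rw [show (((4:Fin 7):ℕ) + 1) = 5 from rfl] at e
      have p : ∏ k ∈ ({0,1,2,3} : Finset (Fin 7)), (1 + Real.sqrt (1 - lam k ^ 2)) = (1 + Real.sqrt (1 - lam 0 ^ 2)) * (1 + Real.sqrt (1 - lam 1 ^ 2)) * (1 + Real.sqrt (1 - lam 2 ^ 2)) * (1 + Real.sqrt (1 - lam 3 ^ 2)) := by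
        simp [Finset.prod_insert]; try ring
      rw [p] at e
      norm_num at e
      linarith
    have c5 : lam 5 * ((1 + Real.sqrt (1 - lam 0 ^ 2)) * (1 + Real.sqrt (1 - lam 1 ^ 2)) * (1 + Real.sqrt (1 - lam 2 ^ 2)) * (1 + Real.sqrt (1 - lam 3 ^ 2)) * (1 + Real.sqrt (1 - lam 4 ^ 2))) > 16 := by
      have e := hcond 5
      rw [show Finset.Iio ((5:Fin 7)) = {0,1,2,3,4} from by decide] at e
      rw [show (((5:Fin 7):ℕ) + 1) = 6 from rfl] at e
      have p : ∏ k ∈ ({0,1,2,3,4} : Finset (Fin 7)), (1 + Real.sqrt (1 - lam k ^ 2)) = (1 + Real.sqrt (1 - lam 0 ^ 2)) * (1 + Real.sqrt (1 - lam 1 ^ 2)) * (1 + Real.sqrt (1 - lam 2 ^ 2)) * (1 + Real.sqrt (1 - lam 3 ^ 2)) * (1 + Real.sqrt (1 - lam 4 ^ 2)) := by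
        simp [Finset.prod_insert]; try ring
      rw [p] at e
      norm_num at e
      linarith
    have key := core (lam 0) (lam 1) (lam 2) (lam 3) (lam 4) (lam 5)
      (hIcc 1).1 (hIcc 2).1 (hIcc 3).1 (hIcc 4).1 (hIcc 5).1
      c0 c1 c2 c3 c4 c5
    have e6 := hcond 6
    rw [show Finset.Iio ((6:Fin 7)) = {0,1,2,3,4,5} from by decide] at e6
    rw [show (((6:Fin 7):ℕ) + 1) = 7 from rfl] at e6
    have p : ∏ k ∈ ({0,1,2,3,4,5} : Finset (Fin 7)), (1 + Real.sqrt (1 - lam k ^ 2)) = (1 + Real.sqrt (1 - lam 0 ^ 2)) * (1 + Real.sqrt (1 - lam 1 ^ 2)) * (1 + Real.sqrt (1 - lam 2 ^ 2)) * (1 + Real.sqrt (1 - lam 3 ^ 2)) * (1 + Real.sqrt (1 - lam 4 ^ 2)) * (1 + Real.sqrt (1 - lam 5 ^ 2)) := by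
      simp [Finset.prod_insert]; try ring
    rw [p] at e6
    norm_num at e6
    have hc6 : lam 6 * ((1 + Real.sqrt (1 - lam 0 ^ 2)) * (1 + Real.sqrt (1 - lam 1 ^ 2)) * (1 + Real.sqrt (1 - lam 2 ^ 2)) * (1 + Real.sqrt (1 - lam 3 ^ 2)) * (1 + Real.sqrt (1 - lam 4 ^ 2)) * (1 + Real.sqrt (1 - lam 5 ^ 2))) > 32 := by linarith
    have hP : (0:ℝ) ≤ (1 + Real.sqrt (1 - lam 0 ^ 2)) * (1 + Real.sqrt (1 - lam 1 ^ 2)) * (1 + Real.sqrt (1 - lam 2 ^ 2)) * (1 + Real.sqrt (1 - lam 3 ^ 2)) * (1 + Real.sqrt (1 - lam 4 ^ 2)) * (1 + Real.sqrt (1 - lam 5 ^ 2)) := by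
      have h0 := Real.sqrt_nonneg (1 - lam 0^2)
      have h1 := Real.sqrt_nonneg (1 - lam 1^2)
      have h2 := Real.sqrt_nonneg (1 - lam 2^2)
      have h3 := Real.sqrt_nonneg (1 - lam 3^2)
      have h4 := Real.sqrt_nonneg (1 - lam 4^2)
      have h5 := Real.sqrt_nonneg (1 - lam 5^2)
      positivity
    have h6 : lam 6 ≤ 1 := (hIcc 6).2
    have hle := mul_le_mul_of_nonneg_right h6 hP
    rw [one_mul] at hle
    linarith
  · intro lam hIcc hcond
    have c0 : lam 0 > 1/2 := by
      have e := hcond 0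
      rw [show Finset.Iio (0:Fin 6) = ∅ from by decide] at e
      rw [show (((0:Fin 6):ℕ) + 1) = 1 from rfl] at e
      norm_num at e
      linarith
    have c1 : lam 1 * ((1 + Real.sqrt (1 - lam 0 ^ 2))) > 1 := by
      have e := hcond 1
      rw [show Finset.Iio ((1:Fin 6)) = {0} from by decide] at e
      rw [show (((1:Fin 6):ℕ) + 1) = 2 from rfl] at e
      have p : ∏ k ∈ ({0} : Finset (Fin 6)), (1 + Real.sqrt (1 - lam k ^ 2)) = (1 + Real.sqrt (1 - lam 0 ^ 2)) := by
        simp [Finset.prod_insert]; try ring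
      rw [p] at e
      norm_num at e
      linarith
    have c2 : lam 2 * ((1 + Real.sqrt (1 - lam 0 ^ 2)) * (1 + Real.sqrt (1 - lam 1 ^ 2))) > 2 := by
      have e := hcond 2
      rw [show Finset.Iio ((2:Fin 6)) = {0,1} from by decide] at e
      rw [show (((2:Fin 6):ℕ) + 1) = 3 from rfl] at e
      have p : ∏ k ∈ ({0,1} : Finset (Fin 6)), (1 + Real.sqrt (1 - lam k ^ 2)) = (1 + Real.sqrt (1 - lam 0 ^ 2)) * (1 + Real.sqrt (1 - lam 1 ^ 2)) := by
        simp [Finset.prod_insert]; try ring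
      rw [p] at e
      norm_num at e
      linarith
    have c3 : lam 3 * ((1 + Real.sqrt (1 - lam 0 ^ 2)) * (1 + Real.sqrt (1 - lam 1 ^ 2)) * (1 + Real.sqrt (1 - lam 2 ^ 2))) > 4 := by
      have e := hcond 3
      rw [show Finset.Iio ((3:Fin 6)) = {0,1,2} from by decide] at e
      rw [show (((3:Fin 6):ℕ) + 1) = 4 from rfl] at e
      have p : ∏ k ∈ ({0,1,2} : Finset (Fin 6)), (1 + Real.sqrt (1 - lam k ^ 2)) = (1 + Real.sqrt (1 - lam 0 ^ 2)) * (1 + Real.sqrt (1 - lam 1 ^ 2)) * (1 + Real.sqrt (1 - lam 2 ^ 2)) := by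
        simp [Finset.prod_insert]; try ring
      rw [p] at e
      norm_num at e
      linarith
    have c4 : lam 4 * ((1 + Real.sqrt (1 - lam 0 ^ 2)) * (1 + Real.sqrt (1 - lam 1 ^ 2)) * (1 + Real.sqrt (1 - lam 2 ^ 2)) * (1 + Real.sqrt (1 - lam 3 ^ 2))) > 8 := by
      have e := hcond 4
      rw [show Finset.Iio ((4:Fin 6)) = {0,1,2,3} from by decide] at e
      rw [show (((4:Fin 6):ℕ) + 1) = 5 from rfl] at e
      have p : ∏ k ∈ ({0,1,2,3} : Finset (Fin 6)), (1 + Real.sqrt (1 - lam k ^ 2)) = (1 + Real.sqrt (1 - lam 0 ^ 2)) * (1 + Real.sqrt (1 - lam 1 ^ 2)) * (1 + Real.sqrt (1 - lam 2 ^ 2)) * (1 + Real.sqrt (1 - lam 3 ^ 2)) := by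
        simp [Finset.prod_insert]; try ring
      rw [p] at e
      norm_num at e
      linarith
    have c5 : lam 5 * ((1 + Real.sqrt (1 - lam 0 ^ 2)) * (1 + Real.sqrt (1 - lam 1 ^ 2)) * (1 + Real.sqrt (1 - lam 2 ^ 2)) * (1 + Real.sqrt (1 - lam 3 ^ 2)) * (1 + Real.sqrt (1 - lam 4 ^ 2))) > 16 := by
      have e := hcond 5
      rw [show Finset.Iio ((5:Fin 6)) = {0,1,2,3,4} from by decide] at e
      rw [show (((5:Fin 6):ℕ) + 1) = 6 from rfl] at e
      have p : ∏ k ∈ ({0,1,2,3,4} : Finset (Fin 6)), (1 + Real.sqrt (1 - lam k ^ 2)) = (1 + Real.sqrt (1 - lam 0 ^ 2)) * (1 + Real.sqrt (1 - lam 1 ^ 2)) * (1 + Real.sqrt (1 - lam 2 ^ 2)) * (1 + Real.sqrt (1 - lam 3 ^ 2)) * (1 + Real.sqrt (1 - lam 4 ^ 2)) := by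
        simp [Finset.prod_insert]; try ring
      rw [p] at e
      norm_num at e
      linarith
    have key := core (lam 0) (lam 1) (lam 2) (lam 3) (lam 4) (lam 5)
      (hIcc 1).1 (hIcc 2).1 (hIcc 3).1 (hIcc 4).1 (hIcc 5).1
      c0 c1 c2 c3 c4 c5
    rw [Fin.prod_univ_six]
    exact key
end

section
/- (Appendix B, optimality) Let f_cl = 3/4 + (−1/3 + 2√6/9)/4. There do NOT exist λ₁, λ₂, λ₃, λ₄ ∈ [0,1] such that for every i ∈ {1,2,3,4}: f_cl/2 + (1/4)·[1 + (λ_i/3^{i−1})·∏_{k=1}^{i−1}(1 + 2√(1 − λ_k²))] > f_cl. Hence at most 3 observers can sequentially prepare remote states from the circle with polar angle arctan√2 (or π − arctan√2) with nonclassical average fidelity when a maximally entangled state is initially shared. -/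
private lemma sqrt_bd {x a r : ℝ} (ha : 0 ≤ a) (hx : a ≤ x) (hr : 0 ≤ r)
    (h : 1 ≤ a^2 + r^2) : Real.sqrt (1 - x^2) ≤ r := by
  have h1 : 1 - x^2 ≤ r^2 := by nlinarith
  calc Real.sqrt (1 - x^2) ≤ Real.sqrt (r^2) := Real.sqrt_le_sqrt h1
    _ = r := Real.sqrt_sq hr

/-- Appendix B (optimality): no 4 sequential observers can all prepare remote states
from the circle with polar angle `arctan √2` with average fidelity exceeding the
classical bound `f_cl = 3/4 + (−1/3 + 2√6/9)/4`. -/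
theorem at_most_three_bobs_nonequatorial :
    ¬ ∃ lam : Fin 4 → ℝ, (∀ i, lam i ∈ Set.Icc (0:ℝ) 1) ∧
      ∀ i : Fin 4,
        (3/4 + (-1/3 + 2 * Real.sqrt 6 / 9)/4) / 2
            + (1/4) * (1 + lam i / 3 ^ (i : ℕ)
                * ∏ k ∈ Finset.Iio i, (1 + 2 * Real.sqrt (1 - lam k ^ 2)))
          > 3/4 + (-1/3 + 2 * Real.sqrt 6 / 9)/4 := by
  rintro ⟨lam, hmem, h⟩
  have h6 : Real.sqrt 6 ≥ 2.4486 := by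
    nlinarith [Real.sq_sqrt (by norm_num : (0:ℝ) ≤ 6), Real.sqrt_nonneg 6]
  -- set products
  have e0 : Finset.Iio (0 : Fin 4) = ∅ := by decide
  have e1 : Finset.Iio (1 : Fin 4) = {0} := by decide
  have e2 : Finset.Iio (2 : Fin 4) = {0, 1} := by decide
  have e3 : Finset.Iio (3 : Fin 4) = {0, 1, 2} := by decide
  set s : Fin 4 → ℝ := fun k => Real.sqrt (1 - lam k ^ 2) with hs
  have sn : ∀ k, 0 ≤ s k := fun k => Real.sqrt_nonneg _
  have ln : ∀ k, 0 ≤ lam k := fun k => (hmem k).1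
  have lu : ∀ k, lam k ≤ 1 := fun k => (hmem k).2
  -- i = 0
  have h0 := h 0
  rw [e0] at h0
  simp only [Finset.prod_empty] at h0
  have hl0 : (0.6054 : ℝ) ≤ lam 0 := by
    norm_num at h0; nlinarith
  have hs0 : s 0 ≤ 0.796 := sqrt_bd (by norm_num) hl0 (by norm_num) (by norm_num)
  -- i = 1
  have h1 := h 1
  rw [e1] at h1
  simp only [Finset.prod_singleton] at h1
  have hl1 : (0.7006 : ℝ) ≤ lam 1 := by
    norm_num at h1
    nlinarith [sn 0, ln 1, mul_nonneg (ln 1) (sn 0)]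
  have hs1 : s 1 ≤ 0.7136 := sqrt_bd (by norm_num) hl1 (by norm_num) (by norm_num)
  -- i = 2
  have h2 := h 2
  rw [e2] at h2
  rw [Finset.prod_insert (by decide), Finset.prod_singleton] at h2
  have hq01 : (1 + 2 * s 0) * (1 + 2 * s 1) ≤ 6.29131 := by
    nlinarith [sn 0, sn 1]
  have hl2 : (0.866 : ℝ) ≤ lam 2 := by
    norm_num at h2
    nlinarith [sn 0, sn 1, ln 2, mul_nonneg (mul_nonneg (ln 2) (sn 0)) (sn 1),
      mul_nonneg (ln 2) (sn 0), mul_nonneg (ln 2) (sn 1)]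
  have hs2 : s 2 ≤ 0.5001 := sqrt_bd (by norm_num) hl2 (by norm_num) (by norm_num)
  -- i = 3
  have h3 := h 3
  rw [e3] at h3
  rw [Finset.prod_insert (by decide), Finset.prod_insert (by decide),
    Finset.prod_singleton] at h3
  have hq0 : (0:ℝ) ≤ (1 + 2 * s 0) * (1 + 2 * s 1) := by positivity
  have hq012 : (1 + 2 * s 0) * (1 + 2 * s 1) * (1 + 2 * s 2) ≤ 12.584 := by
    nlinarith [sn 2, hq0, hq01]
  rw [show ((3:Fin 4):ℕ) = 3 from rfl] at h3
  norm_num at h3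
  have hQn : (0:ℝ) ≤ (1 + 2 * s 0) * (1 + 2 * s 1) * (1 + 2 * s 2) := by positivity
  nlinarith [ln 3, lu 3, hQn, mul_le_of_le_one_left hQn (lu 3)]
end

section
/- (Theorem 3) Let ξ ∈ [0, π/2] and for λ₁, …, λₙ ∈ [0,1] define H_i(ξ, λ) = 1/2 + (sin(2ξ)·λ_i/2^i)·∏_{k=1}^{i−1}(1 + √(1 − λ_k²)). Then: (i) for every ξ ∈ [0, π/2] there do NOT exist λ₁, …, λ₇ ∈ [0,1] with H_i(ξ, λ) > 3/4 for all i ∈ {1, …, 7}; (ii) H₁(ξ, λ₁) = (1 + λ₁·sin 2ξ)/2 > 3/4 if and only if 2·λ₁·sin(2ξ) > 1; in particular, if sin(2ξ) ≤ 1/2 (equivalently ξ ∈ [0, π/12] ∪ [5π/12, π/2]), then H₁(ξ, λ₁) ≤ 3/4 for every λ₁ ∈ [0,1], so not even one observer can achieve nonclassical RSP fidelity. -/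
private lemma rsp_step0 {s l : ℝ} (hs : s ≤ 1) (hl : 0 ≤ l)
    (h : 1/2 + s * l / 2 ^ 1 * 1 > 3/4) : 1/2 < l := by nlinarith

private lemma rsp_lam1 {s l P : ℝ} (hs : s ≤ 1) (hl : 0 ≤ l) (hP1 : 1 ≤ P)
    (hPU : P < 18661/10000) (h : 1/2 + s * l / 2 ^ (1 + 1) * P > 3/4) :
    5358/10000 < l := by
  nlinarith [mul_nonneg hl (by linarith : (0:ℝ) ≤ P)]

private lemma rsp_lam2 {s l P : ℝ} (hs : s ≤ 1) (hl : 0 ≤ l) (hP1 : 1 ≤ P)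
    (hPU : P < 3441835/1000000) (h : 1/2 + s * l / 2 ^ (2 + 1) * P > 3/4) :
    5810/10000 < l := by
  nlinarith [mul_nonneg hl (by linarith : (0:ℝ) ≤ P)]

private lemma rsp_lam3 {s l P : ℝ} (hs : s ≤ 1) (hl : 0 ≤ l) (hP1 : 1 ≤ P)
    (hPU : P < 6243489/1000000) (h : 1/2 + s * l / 2 ^ (3 + 1) * P > 3/4) :
    6406/10000 < l := by
  nlinarith [mul_nonneg hl (by linarith : (0:ℝ) ≤ P)]

private lemma rsp_lam4 {s l P : ℝ} (hs : s ≤ 1) (hl : 0 ≤ l) (hP1 : 1 ≤ P)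
    (hPU : P < 11038489/1000000) (h : 1/2 + s * l / 2 ^ (4 + 1) * P > 3/4) :
    7247/10000 < l := by
  nlinarith [mul_nonneg hl (by linarith : (0:ℝ) ≤ P)]

private lemma rsp_lam5 {s l P : ℝ} (hs : s ≤ 1) (hl : 0 ≤ l) (hP1 : 1 ≤ P)
    (hPU : P < 18645112/1000000) (h : 1/2 + s * l / 2 ^ (5 + 1) * P > 3/4) :
    8581/10000 < l := by
  nlinarith [mul_nonneg hl (by linarith : (0:ℝ) ≤ P)]

private lemma rsp_r0 {l r : ℝ} (hc : 1/2 < l) (hr0 : 0 ≤ r)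
    (hr2 : r ^ 2 = 1 - l ^ 2) : r < 8661/10000 := by nlinarith

private lemma rsp_r1 {l r : ℝ} (hc : 5358/10000 < l) (hr0 : 0 ≤ r)
    (hr2 : r ^ 2 = 1 - l ^ 2) : r < 8444/10000 := by nlinarith

private lemma rsp_r2 {l r : ℝ} (hc : 5810/10000 < l) (hr0 : 0 ≤ r)
    (hr2 : r ^ 2 = 1 - l ^ 2) : r < 814/1000 := by nlinarith

private lemma rsp_r3 {l r : ℝ} (hc : 6406/10000 < l) (hr0 : 0 ≤ r)
    (hr2 : r ^ 2 = 1 - l ^ 2) : r < 768/1000 := by nlinarith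

private lemma rsp_r4 {l r : ℝ} (hc : 7247/10000 < l) (hr0 : 0 ≤ r)
    (hr2 : r ^ 2 = 1 - l ^ 2) : r < 6891/10000 := by nlinarith

private lemma rsp_r5 {l r : ℝ} (hc : 8581/10000 < l) (hr0 : 0 ≤ r)
    (hr2 : r ^ 2 = 1 - l ^ 2) : r < 5135/10000 := by nlinarith

private lemma rsp_P2 {P r : ℝ} (hP1 : 1 ≤ P) (hPU : P < 18661/10000)
    (hr0 : 0 ≤ r) (hrb : r < 8444/10000) : P * (1 + r) < 3441835/1000000 ∧ 1 ≤ P * (1 + r) := by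
  constructor <;> nlinarith

private lemma rsp_P3 {P r : ℝ} (hP1 : 1 ≤ P) (hPU : P < 3441835/1000000)
    (hr0 : 0 ≤ r) (hrb : r < 814/1000) : P * (1 + r) < 6243489/1000000 ∧ 1 ≤ P * (1 + r) := by
  constructor <;> nlinarith

private lemma rsp_P4 {P r : ℝ} (hP1 : 1 ≤ P) (hPU : P < 6243489/1000000)
    (hr0 : 0 ≤ r) (hrb : r < 768/1000) : P * (1 + r) < 11038489/1000000 ∧ 1 ≤ P * (1 + r) := by
  constructor <;> nlinarith

private lemma rsp_P5 {P r : ℝ} (hP1 : 1 ≤ P) (hPU : P < 11038489/1000000)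
    (hr0 : 0 ≤ r) (hrb : r < 6891/10000) : P * (1 + r) < 18645112/1000000 ∧ 1 ≤ P * (1 + r) := by
  constructor <;> nlinarith

private lemma rsp_P6 {P r : ℝ} (hP1 : 1 ≤ P) (hPU : P < 18645112/1000000)
    (hr0 : 0 ≤ r) (hrb : r < 5135/10000) : P * (1 + r) < 28219378/1000000 ∧ 1 ≤ P * (1 + r) := by
  constructor <;> nlinarith

private lemma rsp_final {s l P : ℝ} (hs : s ≤ 1) (hl0 : 0 ≤ l) (hl1 : l ≤ 1)
    (hP1 : 1 ≤ P) (hPU : P < 28219378/1000000)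
    (h : 1/2 + s * l / 2 ^ (6 + 1) * P > 3/4) : False := by
  nlinarith [mul_nonneg hl0 (by linarith : (0:ℝ) ≤ P)]

private lemma rsp_chain (s l0 l1 l2 l3 l4 l5 l6 r0 r1 r2 r3 r4 r5 : ℝ)
    (hs : s ≤ 1)
    (hl00 : 0 ≤ l0) (hl01 : l0 ≤ 1)
    (hl10 : 0 ≤ l1) (hl11 : l1 ≤ 1)
    (hl20 : 0 ≤ l2) (hl21 : l2 ≤ 1)
    (hl30 : 0 ≤ l3) (hl31 : l3 ≤ 1)
    (hl40 : 0 ≤ l4) (hl41 : l4 ≤ 1)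
    (hl50 : 0 ≤ l5) (hl51 : l5 ≤ 1)
    (hl60 : 0 ≤ l6) (hl61 : l6 ≤ 1)
    (hr00 : 0 ≤ r0) (hr02 : r0 ^ 2 = 1 - l0 ^ 2)
    (hr10 : 0 ≤ r1) (hr12 : r1 ^ 2 = 1 - l1 ^ 2)
    (hr20 : 0 ≤ r2) (hr22 : r2 ^ 2 = 1 - l2 ^ 2)
    (hr30 : 0 ≤ r3) (hr32 : r3 ^ 2 = 1 - l3 ^ 2)
    (hr40 : 0 ≤ r4) (hr42 : r4 ^ 2 = 1 - l4 ^ 2)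
    (hr50 : 0 ≤ r5) (hr52 : r5 ^ 2 = 1 - l5 ^ 2)
    (h0 : 1/2 + s * l0 / 2 ^ (0 + 1) * 1 > 3/4)
    (h1 : 1/2 + s * l1 / 2 ^ (1 + 1) * ((1 + r0)) > 3/4)
    (h2 : 1/2 + s * l2 / 2 ^ (2 + 1) * ((1 + r0) * ((1 + r1))) > 3/4)
    (h3 : 1/2 + s * l3 / 2 ^ (3 + 1) * ((1 + r0) * ((1 + r1) * ((1 + r2)))) > 3/4)
    (h4 : 1/2 + s * l4 / 2 ^ (4 + 1) * ((1 + r0) * ((1 + r1) * ((1 + r2) * ((1 + r3))))) > 3/4)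
    (h5 : 1/2 + s * l5 / 2 ^ (5 + 1) * ((1 + r0) * ((1 + r1) * ((1 + r2) * ((1 + r3) * ((1 + r4)))))) > 3/4)
    (h6 : 1/2 + s * l6 / 2 ^ (6 + 1) * ((1 + r0) * ((1 + r1) * ((1 + r2) * ((1 + r3) * ((1 + r4) * ((1 + r5))))))) > 3/4)
    : False := by
  have H2 : 1/2 + s * l2 / 2 ^ (2 + 1) * ((1 + r0) * (1 + r1)) > 3/4 := by linarith [h2]
  have H3 : 1/2 + s * l3 / 2 ^ (3 + 1) * ((1 + r0) * (1 + r1) * (1 + r2)) > 3/4 := by linarith [h3]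
  have H4 : 1/2 + s * l4 / 2 ^ (4 + 1) * ((1 + r0) * (1 + r1) * (1 + r2) * (1 + r3)) > 3/4 := by linarith [h4]
  have H5 : 1/2 + s * l5 / 2 ^ (5 + 1) * ((1 + r0) * (1 + r1) * (1 + r2) * (1 + r3) * (1 + r4)) > 3/4 := by linarith [h5]
  have H6 : 1/2 + s * l6 / 2 ^ (6 + 1) * ((1 + r0) * (1 + r1) * (1 + r2) * (1 + r3) * (1 + r4) * (1 + r5)) > 3/4 := by linarith [h6]
  have hc0 : 1/2 < l0 := rsp_step0 hs hl00 h0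
  have hb0 : r0 < 8661/10000 := rsp_r0 hc0 hr00 hr02
  have hP1 : (1 + r0) < 18661/10000 := by linarith
  have hP1pos : (1:ℝ) ≤ (1 + r0) := by linarith
  have hc1 : 5358/10000 < l1 := rsp_lam1 hs hl10 hP1pos hP1 h1
  have hb1 : r1 < 8444/10000 := rsp_r1 hc1 hr10 hr12
  obtain ⟨hP2, hP2pos⟩ := rsp_P2 hP1pos hP1 hr10 hb1
  have hc2 : 5810/10000 < l2 := rsp_lam2 hs hl20 hP2pos hP2 H2
  have hb2 : r2 < 814/1000 := rsp_r2 hc2 hr20 hr22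
  obtain ⟨hP3, hP3pos⟩ := rsp_P3 hP2pos hP2 hr20 hb2
  have hc3 : 6406/10000 < l3 := rsp_lam3 hs hl30 hP3pos hP3 H3
  have hb3 : r3 < 768/1000 := rsp_r3 hc3 hr30 hr32
  obtain ⟨hP4, hP4pos⟩ := rsp_P4 hP3pos hP3 hr30 hb3
  have hc4 : 7247/10000 < l4 := rsp_lam4 hs hl40 hP4pos hP4 H4
  have hb4 : r4 < 6891/10000 := rsp_r4 hc4 hr40 hr42
  obtain ⟨hP5, hP5pos⟩ := rsp_P5 hP4pos hP4 hr40 hb4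
  have hc5 : 8581/10000 < l5 := rsp_lam5 hs hl50 hP5pos hP5 H5
  have hb5 : r5 < 5135/10000 := rsp_r5 hc5 hr50 hr52
  obtain ⟨hP6, hP6pos⟩ := rsp_P6 hP5pos hP5 hr50 hb5
  exact rsp_final hs hl60 hl61 hP6pos hP6 H6

/-- Theorem 3: with the non-maximally entangled initial state
`cos ξ |01⟩ − sin ξ |10⟩`, (i) no 7 observers can all exceed the classical equatorial
fidelity bound 3/4; (ii) the first observer succeeds iff `2 λ₁ sin 2ξ > 1`; in
particular when `sin 2ξ ≤ 1/2` (equivalently `ξ ∈ [0,π/12] ∪ [5π/12,π/2]`) not even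
one observer achieves nonclassical RSP fidelity. -/
theorem nonmaximally_entangled_rsp :
    (∀ ξ ∈ Set.Icc (0:ℝ) (Real.pi/2),
      ¬ ∃ lam : Fin 7 → ℝ, (∀ i, lam i ∈ Set.Icc (0:ℝ) 1) ∧
        ∀ i : Fin 7,
          1/2 + Real.sin (2*ξ) * lam i / 2 ^ ((i : ℕ) + 1)
              * ∏ k ∈ Finset.Iio i, (1 + Real.sqrt (1 - lam k ^ 2)) > 3/4) ∧
    (∀ ξ ∈ Set.Icc (0:ℝ) (Real.pi/2), ∀ l₁ ∈ Set.Icc (0:ℝ) 1,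
      ((1 + l₁ * Real.sin (2*ξ))/2 > 3/4 ↔ 2 * l₁ * Real.sin (2*ξ) > 1)) ∧
    (∀ ξ ∈ Set.Icc (0:ℝ) (Real.pi/2),
      (Real.sin (2*ξ) ≤ 1/2 ↔
        ξ ∈ Set.Icc (0:ℝ) (Real.pi/12) ∪ Set.Icc (5*Real.pi/12) (Real.pi/2))) ∧
    (∀ ξ ∈ Set.Icc (0:ℝ) (Real.pi/2), Real.sin (2*ξ) ≤ 1/2 →
      ∀ l₁ ∈ Set.Icc (0:ℝ) 1, (1 + l₁ * Real.sin (2*ξ))/2 ≤ 3/4) := by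
  refine ⟨?_, ?_, ?_, ?_⟩
  · -- part (i)
    rintro ξ hξ ⟨lam, hm, h⟩
    have hs : Real.sin (2*ξ) ≤ 1 := Real.sin_le_one _
    have hr0 : Real.sqrt (1 - lam 0 ^ 2) ^ 2 = 1 - lam 0 ^ 2 :=
      Real.sq_sqrt (by nlinarith [(hm 0).1, (hm 0).2])
    have hr1 : Real.sqrt (1 - lam 1 ^ 2) ^ 2 = 1 - lam 1 ^ 2 :=
      Real.sq_sqrt (by nlinarith [(hm 1).1, (hm 1).2])
    have hr2 : Real.sqrt (1 - lam 2 ^ 2) ^ 2 = 1 - lam 2 ^ 2 :=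
      Real.sq_sqrt (by nlinarith [(hm 2).1, (hm 2).2])
    have hr3 : Real.sqrt (1 - lam 3 ^ 2) ^ 2 = 1 - lam 3 ^ 2 :=
      Real.sq_sqrt (by nlinarith [(hm 3).1, (hm 3).2])
    have hr4 : Real.sqrt (1 - lam 4 ^ 2) ^ 2 = 1 - lam 4 ^ 2 :=
      Real.sq_sqrt (by nlinarith [(hm 4).1, (hm 4).2])
    have hr5 : Real.sqrt (1 - lam 5 ^ 2) ^ 2 = 1 - lam 5 ^ 2 :=
      Real.sq_sqrt (by nlinarith [(hm 5).1, (hm 5).2])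
    have h0 := h 0
    rw [show Finset.Iio (0:Fin 7) = ∅ from by decide, Finset.prod_empty] at h0
    simp only [show ((0:Fin 7):ℕ) = 0 from rfl] at h0
    have h1 := h 1
    rw [show Finset.Iio (1:Fin 7) = {0} from by decide, Finset.prod_singleton] at h1
    simp only [show ((1:Fin 7):ℕ) = 1 from rfl] at h1
    have h2 := h 2
    rw [show Finset.Iio (2:Fin 7) = {0,1} from by decide, Finset.prod_insert (by decide), Finset.prod_singleton] at h2
    simp only [show ((2:Fin 7):ℕ) = 2 from rfl] at h2
    have h3 := h 3
    rw [show Finset.Iio (3:Fin 7) = {0,1,2} from by decide, Finset.prod_insert (by decide), Finset.prod_insert (by decide), Finset.prod_singleton] at h3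
    simp only [show ((3:Fin 7):ℕ) = 3 from rfl] at h3
    have h4 := h 4
    rw [show Finset.Iio (4:Fin 7) = {0,1,2,3} from by decide, Finset.prod_insert (by decide), Finset.prod_insert (by decide), Finset.prod_insert (by decide), Finset.prod_singleton] at h4
    simp only [show ((4:Fin 7):ℕ) = 4 from rfl] at h4
    have h5 := h 5
    rw [show Finset.Iio (5:Fin 7) = {0,1,2,3,4} from by decide, Finset.prod_insert (by decide), Finset.prod_insert (by decide), Finset.prod_insert (by decide), Finset.prod_insert (by decide), Finset.prod_singleton] at h5
    simp only [show ((5:Fin 7):ℕ) = 5 from rfl] at h5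
    have h6 := h 6
    rw [show Finset.Iio (6:Fin 7) = {0,1,2,3,4,5} from by decide, Finset.prod_insert (by decide), Finset.prod_insert (by decide), Finset.prod_insert (by decide), Finset.prod_insert (by decide), Finset.prod_insert (by decide), Finset.prod_singleton] at h6
    simp only [show ((6:Fin 7):ℕ) = 6 from rfl] at h6
    have hmul : 1/2 + Real.sin (2*ξ) * lam 0 / 2 ^ (0 + 1) * 1 > 3/4 := h0
    exact rsp_chain (Real.sin (2*ξ)) (lam 0) (lam 1) (lam 2) (lam 3) (lam 4) (lam 5) (lam 6) (Real.sqrt (1 - lam 0 ^ 2)) (Real.sqrt (1 - lam 1 ^ 2)) (Real.sqrt (1 - lam 2 ^ 2)) (Real.sqrt (1 - lam 3 ^ 2)) (Real.sqrt (1 - lam 4 ^ 2)) (Real.sqrt (1 - lam 5 ^ 2)) hs (hm 0).1 (hm 0).2 (hm 1).1 (hm 1).2 (hm 2).1 (hm 2).2 (hm 3).1 (hm 3).2 (hm 4).1 (hm 4).2 (hm 5).1 (hm 5).2 (hm 6).1 (hm 6).2 (Real.sqrt_nonneg _) hr0 (Real.sqrt_nonneg _) hr1 (Real.sqrt_nonneg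 _) hr2 (Real.sqrt_nonneg _) hr3 (Real.sqrt_nonneg _) hr4 (Real.sqrt_nonneg _) hr5 hmul h1 h2 h3 h4 h5 h6
  · -- part (ii)
    rintro ξ hξ l₁ hl₁
    constructor <;> intro h <;> nlinarith [h]
  · -- part (iii)
    rintro ξ ⟨hξ0, hξ1⟩
    have hπ := Real.pi_pos
    have hmono := Real.strictMonoOn_sin
    constructor
    · intro hsin
      by_contra hmem
      simp only [Set.mem_union, Set.mem_Icc, not_or, not_and_or, not_le] at hmem
      obtain ⟨hA, hB⟩ := hmem
      have hlt1 : Real.pi/12 < ξ := by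
        rcases hA with h | h
        · linarith
        · exact h
      have hlt2 : ξ < 5*Real.pi/12 := by
        rcases hB with h | h
        · exact h
        · linarith
      rcases le_or_gt (2*ξ) (Real.pi/2) with hc | hc
      · have := hmono (Set.mem_Icc.mpr ⟨by linarith, by linarith⟩)
          (Set.mem_Icc.mpr ⟨by linarith, by linarith⟩) (by linarith : Real.pi/6 < 2*ξ)
        rw [Real.sin_pi_div_six] at this
        linarith
      · have heq : Real.sin (2*ξ) = Real.sin (Real.pi - 2*ξ) := (Real.sin_pi_sub _).symm
        have := hmono (Set.mem_Icc.mpr ⟨by linarith, by linarith⟩)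
          (Set.mem_Icc.mpr ⟨by linarith, by linarith⟩)
          (by linarith : Real.pi/6 < Real.pi - 2*ξ)
        rw [Real.sin_pi_div_six] at this
        linarith
    · rintro (⟨h1, h2⟩ | ⟨h1, h2⟩)
      · have := hmono.monotoneOn (Set.mem_Icc.mpr ⟨by linarith, by linarith⟩)
          (Set.mem_Icc.mpr ⟨by linarith, by linarith⟩) (by linarith : 2*ξ ≤ Real.pi/6)
        rw [Real.sin_pi_div_six] at this
        linarith
      · rw [← Real.sin_pi_sub]
        have := hmono.monotoneOn (Set.mem_Icc.mpr ⟨by linarith, by linarith⟩)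
          (Set.mem_Icc.mpr ⟨by linarith, by linarith⟩)
          (by linarith : Real.pi - 2*ξ ≤ Real.pi/6)
        rw [Real.sin_pi_div_six] at this
        linarith
  · -- part (iv)
    rintro ξ ⟨hξ0, hξ1⟩ hs l₁ ⟨hl0, hl1⟩
    have hπ := Real.pi_pos
    have hnn : 0 ≤ Real.sin (2*ξ) :=
      Real.sin_nonneg_of_nonneg_of_le_pi (by linarith) (by linarith)
    nlinarith
end

section
/- (Appendix C) Let c ∈ [0,1] and for λ₁, …, λₙ ∈ [0,1] define W_i(c, λ) = 1/2 + (c·λ_i/2^i)·∏_{k=1}^{i−1}(1 + √(1 − λ_k²)). Then: (i) for every c ∈ [0,1] there do NOT exist λ₁, …, λ₇ ∈ [0,1] with W_i(c, λ) > 3/4 for all i ∈ {1, …, 7}; (ii) W₁(c, λ₁) = (1 + c·λ₁)/2 > 3/4 if and only if 2·c·λ₁ > 1; in particular, if c ≤ 1/2 then W₁(c, λ₁) ≤ 3/4 for every λ₁ ∈ [0,1], so no observer can prepare a remote state at Alice's side with nonclassical fidelity when the Werner parameter satisfies 0 ≤ c ≤ 1/2. -/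
set_option maxHeartbeats 1000000

private lemma werner_step_bound (lam P A A' B : ℝ) (hP0 : 0 ≤ P)
    (hPA : P ≤ A) (hB : 0 ≤ B) (hBlP : B ≤ lam * P) (hAA' : A ≤ A')
    (hsq : A^2 - B^2 ≤ (A' - A)^2) :
    P * (1 + Real.sqrt (1 - lam ^ 2)) ≤ A' := by
  have h1 : P * Real.sqrt (1 - lam ^ 2) = Real.sqrt (P^2 - (lam*P)^2) := by
    have := Real.sqrt_mul (sq_nonneg P) (1 - lam^2)
    rw [Real.sqrt_sq hP0] at this
    rw [← this]
    congr 1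
    ring
  have h2 : Real.sqrt (P^2 - (lam*P)^2) ≤ A' - A := by
    have hx : P^2 - (lam*P)^2 ≤ (A'-A)^2 := by nlinarith
    calc Real.sqrt (P^2 - (lam*P)^2) ≤ Real.sqrt ((A'-A)^2) := Real.sqrt_le_sqrt hx
      _ = A' - A := Real.sqrt_sq (by linarith)
  nlinarith [h1, h2]


/-- Appendix C: with an initially shared Werner state of parameter `c ∈ [0,1]`,
(i) no 7 observers can all exceed the classical equatorial fidelity bound 3/4;
(ii) the first observer succeeds iff `2 c λ₁ > 1`; in particular when `c ≤ 1/2`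
no observer can achieve nonclassical RSP fidelity. -/
theorem werner_state_rsp :
    (∀ c ∈ Set.Icc (0:ℝ) 1,
      ¬ ∃ lam : Fin 7 → ℝ, (∀ i, lam i ∈ Set.Icc (0:ℝ) 1) ∧
        ∀ i : Fin 7,
          1/2 + c * lam i / 2 ^ ((i : ℕ) + 1)
              * ∏ k ∈ Finset.Iio i, (1 + Real.sqrt (1 - lam k ^ 2)) > 3/4) ∧
    (∀ c ∈ Set.Icc (0:ℝ) 1, ∀ l₁ ∈ Set.Icc (0:ℝ) 1,
      ((1 + c * l₁)/2 > 3/4 ↔ 2 * c * l₁ > 1)) ∧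
    (∀ c ∈ Set.Icc (0:ℝ) 1, c ≤ 1/2 →
      ∀ l₁ ∈ Set.Icc (0:ℝ) 1, (1 + c * l₁)/2 ≤ 3/4) := by
  refine ⟨?_, ?_, ?_⟩
  · rintro c ⟨hc0, hc1⟩ ⟨lam, hlam, H⟩
    have hl0 : ∀ k, 0 ≤ lam k := fun k => (hlam k).1
    have hl1 : ∀ k, lam k ≤ 1 := fun k => (hlam k).2
    have H0 := H 0
    have H1 := H 1
    have H2 := H 2
    have H3 := H 3
    have H4 := H 4
    have H5 := H 5
    have H6 := H 6
    rw [show Finset.Iio (0:Fin 7) = ∅ from by decide, Finset.prod_empty] at H0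
    rw [show Finset.Iio (1:Fin 7) = {0} from by decide, Finset.prod_singleton] at H1
    rw [show Finset.Iio (2:Fin 7) = {0,1} from by decide,
        Finset.prod_insert (by decide), Finset.prod_singleton] at H2
    rw [show Finset.Iio (3:Fin 7) = {0,1,2} from by decide,
        Finset.prod_insert (by decide), Finset.prod_insert (by decide),
        Finset.prod_singleton] at H3
    rw [show Finset.Iio (4:Fin 7) = {0,1,2,3} from by decide,
        Finset.prod_insert (by decide), Finset.prod_insert (by decide),
        Finset.prod_insert (by decide), Finset.prod_singleton] at H4
    rw [show Finset.Iio (5:Fin 7) = {0,1,2,3,4} from by decide,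
        Finset.prod_insert (by decide), Finset.prod_insert (by decide),
        Finset.prod_insert (by decide), Finset.prod_insert (by decide),
        Finset.prod_singleton] at H5
    rw [show Finset.Iio (6:Fin 7) = {0,1,2,3,4,5} from by decide,
        Finset.prod_insert (by decide), Finset.prod_insert (by decide),
        Finset.prod_insert (by decide), Finset.prod_insert (by decide),
        Finset.prod_insert (by decide), Finset.prod_singleton] at H6
    simp only [show ((3:Fin 7):ℕ) = 3 from rfl, show ((4:Fin 7):ℕ) = 4 from rfl,
      show ((5:Fin 7):ℕ) = 5 from rfl, show ((6:Fin 7):ℕ) = 6 from rfl] at H3 H4 H5 H6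
    norm_num at H0 H1 H2 H3 H4 H5 H6
    set s0 := Real.sqrt (1 - lam 0 ^ 2) with hs0def
    set s1 := Real.sqrt (1 - lam 1 ^ 2) with hs1def
    set s2 := Real.sqrt (1 - lam 2 ^ 2) with hs2def
    set s3 := Real.sqrt (1 - lam 3 ^ 2) with hs3def
    set s4 := Real.sqrt (1 - lam 4 ^ 2) with hs4def
    set s5 := Real.sqrt (1 - lam 5 ^ 2) with hs5def
    have hs0 : 0 ≤ s0 := Real.sqrt_nonneg _
    have hs1 : 0 ≤ s1 := Real.sqrt_nonneg _
    have hs2 : 0 ≤ s2 := Real.sqrt_nonneg _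
    have hs3 : 0 ≤ s3 := Real.sqrt_nonneg _
    have hs4 : 0 ≤ s4 := Real.sqrt_nonneg _
    have hs5 : 0 ≤ s5 := Real.sqrt_nonneg _
    -- nonnegativity of partial products
    have hP1 : (0:ℝ) ≤ 1 + s0 := by linarith
    have hP2 : (0:ℝ) ≤ (1 + s0) * (1 + s1) := by positivity
    have hP3 : (0:ℝ) ≤ (1 + s0) * (1 + s1) * (1 + s2) := by positivity
    have hP4 : (0:ℝ) ≤ (1 + s0) * (1 + s1) * (1 + s2) * (1 + s3) := by positivity
    have hP5 : (0:ℝ) ≤ (1 + s0) * (1 + s1) * (1 + s2) * (1 + s3) * (1 + s4) := by positivity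
    -- key inequalities lam_i * P_i ≥ 2^(i-1)
    have key0 : (1:ℝ)/2 ≤ lam 0 * 1 := by
      linarith [mul_nonneg (sub_nonneg.2 hc1) (hl0 0)]
    have key1 : (1:ℝ) ≤ lam 1 * (1 + s0) := by
      linarith [mul_nonneg (sub_nonneg.2 hc1) (mul_nonneg (hl0 1) hP1)]
    have key2 : (2:ℝ) ≤ lam 2 * ((1 + s0) * (1 + s1)) := by
      linarith [mul_nonneg (sub_nonneg.2 hc1) (mul_nonneg (hl0 2) hP2)]
    have key3 : (4:ℝ) ≤ lam 3 * ((1 + s0) * (1 + s1) * (1 + s2)) := by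
      linarith [mul_nonneg (sub_nonneg.2 hc1) (mul_nonneg (hl0 3) hP3)]
    have key4 : (8:ℝ) ≤ lam 4 * ((1 + s0) * (1 + s1) * (1 + s2) * (1 + s3)) := by
      linarith [mul_nonneg (sub_nonneg.2 hc1) (mul_nonneg (hl0 4) hP4)]
    have key5 : (16:ℝ) ≤ lam 5 * ((1 + s0) * (1 + s1) * (1 + s2) * (1 + s3) * (1 + s4)) := by
      linarith [mul_nonneg (sub_nonneg.2 hc1) (mul_nonneg (hl0 5) hP5)]
    have key6 : (32:ℝ) ≤ lam 6 *
        ((1 + s0) * (1 + s1) * (1 + s2) * (1 + s3) * (1 + s4) * (1 + s5)) := by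
      linarith [mul_nonneg (sub_nonneg.2 hc1) (mul_nonneg (hl0 6)
        (by positivity : (0:ℝ) ≤ (1 + s0) * (1 + s1) * (1 + s2) * (1 + s3) * (1 + s4) * (1 + s5)))]
    -- chain of upper bounds
    have b1 : (1:ℝ) * (1 + s0) ≤ 1.87 := by
      rw [hs0def]
      exact werner_step_bound (lam 0) 1 1 1.87 (1/2) zero_le_one le_rfl (by norm_num) key0
        (by norm_num) (by norm_num)
    have b1' : (1 + s0) ≤ 1.87 := by linarith
    have b2 : (1 + s0) * (1 + s1) ≤ 3.46 := by
      rw [hs1def]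
      exact werner_step_bound (lam 1) (1 + s0) 1.87 3.46 1 hP1 b1' (by norm_num) key1
        (by norm_num) (by norm_num)
    have b3 : (1 + s0) * (1 + s1) * (1 + s2) ≤ 6.29 := by
      rw [hs2def]
      exact werner_step_bound (lam 2) _ 3.46 6.29 2 hP2 b2 (by norm_num) key2
        (by norm_num) (by norm_num)
    have b4 : (1 + s0) * (1 + s1) * (1 + s2) * (1 + s3) ≤ 11.15 := by
      rw [hs3def]
      exact werner_step_bound (lam 3) _ 6.29 11.15 4 hP3 b3 (by norm_num) key3
        (by norm_num) (by norm_num)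
    have b5 : (1 + s0) * (1 + s1) * (1 + s2) * (1 + s3) * (1 + s4) ≤ 18.92 := by
      rw [hs4def]
      exact werner_step_bound (lam 4) _ 11.15 18.92 8 hP4 b4 (by norm_num) key4
        (by norm_num) (by norm_num)
    have b6 : (1 + s0) * (1 + s1) * (1 + s2) * (1 + s3) * (1 + s4) * (1 + s5) ≤ 29.02 := by
      rw [hs5def]
      exact werner_step_bound (lam 5) _ 18.92 29.02 16 hP5 b5 (by norm_num) key5
        (by norm_num) (by norm_num)
    linarith [key6, b6, mul_nonneg (sub_nonneg.2 (hl1 6))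
      (by positivity : (0:ℝ) ≤ (1 + s0) * (1 + s1) * (1 + s2) * (1 + s3) * (1 + s4) * (1 + s5))]
  · rintro c ⟨hc0, hc1⟩ l₁ ⟨h0, h1⟩
    constructor <;> intro h <;> linarith
  · rintro c ⟨hc0, hc1⟩ hc l₁ ⟨h0, h1⟩
    nlinarith [mul_le_mul hc h1 h0 (by norm_num : (0:ℝ) ≤ 1/2)]
end
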